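/- If 0 < ν < 1 and 2√ν ≤ λ < 1 + ν, then there is no pair (x,y) with x ≠ y satisfying both H(x,y) = 0 and H(y,x) = 0. -/

import Mathlib

noncomputable def H (v l x y : ℝ) : ℝ :=
  1 + l^2 - v^2 + 2*l*v*(1 - x^2)*y + 2*x*l*(1 - v^2*y^2) + x^2*y^2*v*(1 - l^2 - v^2)

theorem stmt1 (v l : ℝ) (hv0 : 0 < v) (hv1 : v < 1)
    (hl1 : 2*Real.sqrt v ≤ l) (hl2 : l < 1 + v) :
    ¬ ∃ x y : ℝ, x ≠ y ∧ H v l x y = 0 ∧ H v l y x = 0 := by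
  rintro ⟨x, y, hxy, h1, h2⟩
  have hl0 : 0 < l := lt_of_lt_of_le (by positivity) hl1
  have hdiff : 2*l*(v*x*y-1)*(x-y)*(v-1) = 0 := by
    have e : H v l x y - H v l y x = 2*l*(v*x*y-1)*(x-y)*(v-1) := by
      unfold H; ring
    rw [h1, h2] at e; linarith
  have hvxy : v*x*y = 1 := by
    rcases mul_eq_zero.1 hdiff with h | h
    · rcases mul_eq_zero.1 h with h | h
      · rcases mul_eq_zero.1 h with h | h
        · linarith
        · linarith [sub_eq_zero.1 h]
      · exact sub_ne_zero.2 hxy h |>.elim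
    · linarith [sub_eq_zero.1 h]
  have hx : x ≠ 0 := by
    rintro rfl; simp at hvxy
  have hy : y = 1/(v*x) := by
    field_simp
    try linarith [hvxy]
  subst hy
  unfold H at h1
  rw [div_pow] at h1
  field_simp at h1
  have hpos : 0 < (1 - v) * ((v+1)^2 - l^2) := by
    apply mul_pos (by linarith)
    nlinarith
  have key : v^4 * x^5 * ((1-v)*((v+1)^2 - l^2)) = 0 := by linear_combination (v^4 * x^4) * h1
  exact mul_ne_zero (mul_ne_zero (pow_ne_zero _ hv0.ne') (pow_ne_zero _ hx)) hpos.ne' key
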